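/- Let A be a real symmetric (or Hermitian) negative definite t × t matrix. Then there exists a diagonal matrix D with strictly positive diagonal entries such that D A D has all row sums strictly negative. -/

import Mathlib

open Finset Matrix

private lemma key_lemma {t : ℕ} (M : Matrix (Fin t) (Fin t) ℝ)
    (hsym : ∀ i j, M i j = M j i)
    (hQ : ∀ x : Fin t → ℝ, x ≠ 0 → 0 < ∑ i, ∑ j, x i * M i j * x j) :
    ∃ x : Fin t → ℝ, (∀ i, 0 ≤ x i) ∧ ∀ i, 1 ≤ ∑ j, M i j * x j := by
  rcases isEmpty_or_nonempty (Fin t) with he | hne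
  · exact ⟨0, fun i => le_rfl, fun i => isEmptyElim i⟩
  set Q : (Fin t → ℝ) → ℝ := fun x => ∑ i, ∑ j, x i * M i j * x j with hQdef
  have hQcont : Continuous Q := by
    apply continuous_finset_sum
    intro i _
    apply continuous_finset_sum
    intro j _
    exact ((continuous_apply i).mul continuous_const).mul (continuous_apply j)
  set N : (Fin t → ℝ) → ℝ := fun x => ∑ i, (x i)^2 with hNdef
  have hNcont : Continuous N := by
    apply continuous_finset_sum
    intro i _
    exact (continuous_apply i).pow 2
  have hNnonneg : ∀ x, 0 ≤ N x := fun x => Finset.sum_nonneg fun i _ => sq_nonneg _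
  have hNcoord : ∀ (x : Fin t → ℝ) (i : Fin t), (x i)^2 ≤ N x := fun x i =>
    Finset.single_le_sum (fun j _ => sq_nonneg (x j)) (Finset.mem_univ i)
  -- the sphere
  set S : Set (Fin t → ℝ) := {x | N x = 1} with hSdef
  have hSclosed : IsClosed S := isClosed_eq hNcont continuous_const
  have hSsub : S ⊆ Metric.closedBall 0 1 := by
    intro x hx
    rw [Metric.mem_closedBall, dist_zero_right]
    refine (pi_norm_le_iff_of_nonneg zero_le_one).2 fun i => ?_
    rw [Real.norm_eq_abs, abs_le]
    have h1 : (x i)^2 ≤ 1 := by rw [← hx]; exact hNcoord x i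
    constructor <;> nlinarith
  have hScompact : IsCompact S :=
    IsCompact.of_isClosed_subset (isCompact_closedBall 0 1) hSclosed hSsub
  have hSne : S.Nonempty := by
    refine ⟨Pi.single (Classical.arbitrary (Fin t)) 1, ?_⟩
    simp only [hSdef, Set.mem_setOf_eq, hNdef, Pi.single_apply]
    simp [ite_pow]
  obtain ⟨z, hzS, hzmin⟩ := hScompact.exists_isMinOn hSne hQcont.continuousOn
  set lam : ℝ := Q z with hlamdef
  have hzne : z ≠ 0 := by
    intro h
    rw [hSdef, Set.mem_setOf_eq, h] at hzS
    simp [hNdef] at hzS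
  have hlam : 0 < lam := hQ z hzne
  -- coercivity: Q x ≥ lam * N x
  have hQlow : ∀ x : Fin t → ℝ, lam * N x ≤ Q x := by
    intro x
    by_cases hx : x = 0
    · simp [hx, hNdef, hQdef]
    · set c : ℝ := Real.sqrt (N x) with hcdef
      have hNxpos : 0 < N x := by
        obtain ⟨i, hi⟩ := Function.ne_iff.1 hx
        have hi' : x i ≠ 0 := by simpa using hi
        have : (0:ℝ) < (x i)^2 := by
          rcases lt_or_gt_of_ne hi' with h | h <;> nlinarith
        exact lt_of_lt_of_le this (hNcoord x i)
      have hc : 0 < c := Real.sqrt_pos.2 hNxpos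
      have hc2 : c^2 = N x := Real.sq_sqrt (hNnonneg x)
      set y : Fin t → ℝ := fun i => x i / c with hydef
      have hyS : y ∈ S := by
        have hNy : N y = 1 := by
          have h1 : N y = N x / c^2 := by
            simp only [hNdef, hydef, div_pow, ← Finset.sum_div]
          rw [h1, ← hc2, div_self (by positivity)]
        exact hNy
      have hle : lam ≤ Q y := hzmin hyS
      have hxy : ∀ i, x i = c * y i := by
        intro i
        simp only [hydef]
        field_simp
      have hQxy : Q x = c^2 * Q y := by
        simp only [hQdef, Finset.mul_sum]
        refine Finset.sum_congr rfl fun i _ => ?_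
        refine Finset.sum_congr rfl fun j _ => ?_
        rw [hxy i, hxy j]
        ring
      rw [← hc2, hQxy]
      nlinarith [mul_le_mul_of_nonneg_left hle (sq_nonneg c)]
  -- the box
  set R : ℝ := 2 * (t:ℝ) / lam + 1 with hRdef
  have hR1 : 1 ≤ R := by
    have : (0:ℝ) ≤ 2 * (t:ℝ) / lam := by positivity
    rw [hRdef]
    linarith
  set K : Set (Fin t → ℝ) := Set.pi Set.univ (fun _ => Set.Icc (0:ℝ) R) with hKdef
  have hKcompact : IsCompact K := isCompact_univ_pi fun i => isCompact_Icc
  have h0K : (0 : Fin t → ℝ) ∈ K := by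
    intro i _
    simp only [Pi.zero_apply, Set.mem_Icc]
    exact ⟨le_rfl, by linarith⟩
  set q : (Fin t → ℝ) → ℝ := fun x => Q x - 2 * ∑ i, x i with hqdef
  have hqcont : Continuous q :=
    hQcont.sub (continuous_const.mul (continuous_finset_sum _ fun i _ => continuous_apply i))
  obtain ⟨w, hwK, hwmin⟩ := hKcompact.exists_isMinOn ⟨0, h0K⟩ hqcont.continuousOn
  have hw0 : q w ≤ 0 := by
    have := hwmin h0K
    simpa [hqdef, hQdef] using this
  have hwmem : ∀ i, w i ∈ Set.Icc (0:ℝ) R := fun i => hwK i (Set.mem_univ i)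
  have hwnonneg : ∀ i, 0 ≤ w i := fun i => (hwmem i).1
  -- bound on w
  set s : ℝ := Real.sqrt (N w) with hsdef
  have hs0 : 0 ≤ s := Real.sqrt_nonneg _
  have hs2 : s^2 = N w := Real.sq_sqrt (hNnonneg w)
  have hwile : ∀ i, w i ≤ s := by
    intro i
    have h1 : (w i)^2 ≤ s^2 := by rw [hs2]; exact hNcoord w i
    nlinarith [hwnonneg i]
  have hLle : ∑ i, w i ≤ (t:ℝ) * s := by
    calc ∑ i, w i ≤ ∑ _i : Fin t, s := Finset.sum_le_sum fun i _ => hwile i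
    _ = (t:ℝ) * s := by simp [mul_comm]
  have hQwN : lam * s^2 ≤ Q w := by rw [hs2]; exact hQlow w
  have hsle : s ≤ 2 * (t:ℝ) / lam := by
    rcases eq_or_lt_of_le hs0 with h | h
    · rw [← h]; positivity
    · rw [le_div_iff₀ hlam]
      have h1 : lam * s^2 ≤ 2 * ((t:ℝ) * s) := by
        have : Q w ≤ 2 * ∑ i, w i := by simp only [hqdef] at hw0; linarith
        nlinarith
      nlinarith
  have hwR : ∀ i, w i ≤ R - 1 := fun i => le_trans (hwile i) (by rw [hRdef]; linarith)
  -- first order conditions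
  refine ⟨w, hwnonneg, fun i => ?_⟩
  by_contra hcon
  push_neg at hcon
  set g : ℝ := ∑ j, M i j * w j with hgdef
  have hMii : 0 < M i i := by
    have h := hQ (Pi.single i 1) (by
      intro h
      have := congrFun h i
      simp at this)
    simpa [Pi.single_apply, ite_mul, mul_ite, mul_zero, zero_mul, mul_one, one_mul] using h
  set sp : ℝ := min 1 ((1 - g) / M i i) with hspdef
  have hsppos : 0 < sp := lt_min one_pos (div_pos (by linarith) hMii)
  have hsp1 : sp ≤ 1 := min_le_left _ _
  have hspMii : sp * M i i ≤ 1 - g := by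
    have := min_le_right 1 ((1 - g) / M i i)
    calc sp * M i i ≤ ((1 - g) / M i i) * M i i := by
          apply mul_le_mul_of_nonneg_right this hMii.le
    _ = 1 - g := by field_simp
  set y : Fin t → ℝ := fun j => w j + (if j = i then sp else 0) with hydef
  have hyK : y ∈ K := by
    intro j _
    by_cases hj : j = i
    · subst hj
      simp only [hydef, eq_self_iff_true, if_true, Set.mem_Icc]
      exact ⟨by linarith [hwnonneg j], by linarith [hwR j]⟩
    · simp only [hydef, if_neg hj, add_zero]
      exact hwmem j
  have hQy : Q y = Q w + 2 * sp * g + sp * sp * M i i := by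
    have e1 : Q y = ∑ a, ∑ b, (w a * M a b * w b
        + ((if a = i then sp else 0) * (M a b * w b)
          + (w a * M a b) * (if b = i then sp else 0)
          + (if a = i then sp else 0) * M a b * (if b = i then sp else 0))) := by
      refine Finset.sum_congr rfl fun a _ => Finset.sum_congr rfl fun b _ => ?_
      simp only [hydef]
      ring
    have hQw : ∑ a, ∑ b, w a * M a b * w b = Q w := rfl
    have cross1 : ∑ a, ∑ b, (if a = i then sp else 0) * (M a b * w b) = sp * g := by
      rw [Finset.sum_eq_single i]
      · simp only [eq_self_iff_true, if_true]
        rw [hgdef, Finset.mul_sum]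
      · intro b _ hb
        simp [hb]
      · intro h
        exact absurd (Finset.mem_univ i) h
    have cross2 : ∑ a, ∑ b, w a * M a b * (if b = i then sp else 0) = sp * g := by
      have h1 : ∀ a, ∑ b, w a * M a b * (if b = i then sp else 0) = w a * M a i * sp := by
        intro a
        simp [mul_ite, mul_zero, Finset.sum_ite_eq', Finset.mem_univ]
      rw [Finset.sum_congr rfl fun a _ => h1 a, hgdef, Finset.mul_sum]
      refine Finset.sum_congr rfl fun a _ => ?_
      rw [hsym a i]
      ring
    have cross3 : ∑ a, ∑ b, (if a = i then sp else 0) * M a b * (if b = i then sp else 0)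
        = sp * M i i * sp := by
      rw [Finset.sum_eq_single i]
      · simp [mul_ite, mul_zero, Finset.sum_ite_eq', Finset.mem_univ]
      · intro b _ hb
        simp [hb]
      · intro h
        exact absurd (Finset.mem_univ i) h
    rw [e1]
    simp only [Finset.sum_add_distrib]
    rw [hQw, cross1, cross2, cross3]
    ring
  have hLy : ∑ j, y j = (∑ j, w j) + sp := by
    simp only [hydef, Finset.sum_add_distrib]
    simp
  have hmin : q w ≤ q y := hwmin hyK
  simp only [hqdef] at hmin
  rw [hQy, hLy] at hmin
  nlinarith [mul_le_mul_of_nonneg_left hspMii hsppos.le,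
    mul_pos hsppos (sub_pos.mpr hcon)]

/-- For a symmetric negative definite real matrix `A`, there is a diagonal
matrix `D` with strictly positive entries such that `D A D` has all row sums
strictly negative. -/
theorem stmt5 {t : ℕ} (A : Matrix (Fin t) (Fin t) ℝ)
    (hsymm : A.IsSymm) (hneg : (-A).PosDef) :
    ∃ d : Fin t → ℝ, (∀ i, 0 < d i) ∧
      ∀ i, ∑ j, d i * A i j * d j < 0 := by
  have hsym : ∀ i j, (-A) i j = (-A) j i := by
    intro i j
    have := hsymm.apply j i
    simp only [Matrix.neg_apply, this]
  have hQ : ∀ x : Fin t → ℝ, x ≠ 0 → 0 < ∑ i, ∑ j, x i * (-A) i j * x j := by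
    intro x hx
    have h := hneg.dotProduct_mulVec_pos hx
    have heq : dotProduct (star x) ((-A) *ᵥ x) = ∑ i, ∑ j, x i * (-A) i j * x j := by
      simp only [dotProduct, Matrix.mulVec, star_trivial]
      refine Finset.sum_congr rfl fun i _ => ?_
      rw [Finset.mul_sum]
      exact Finset.sum_congr rfl fun j _ => by ring
    rwa [heq] at h
  obtain ⟨x, hx0, hx1⟩ := key_lemma (-A) hsym hQ
  set T : ℝ := ∑ i, |∑ j, A i j| with hTdef
  have hT0 : 0 ≤ T := Finset.sum_nonneg fun i _ => abs_nonneg _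
  set eps : ℝ := 1 / (1 + T) with hepsdef
  have hepspos : 0 < eps := by positivity
  refine ⟨fun i => x i + eps, fun i => by have := hx0 i; positivity, fun i => ?_⟩
  have hrow : |∑ j, A i j| ≤ T := by
    rw [hTdef]
    exact Finset.single_le_sum (f := fun k => |∑ j, A k j|) (fun k _ => abs_nonneg _) (Finset.mem_univ i)
  have hepsrow : eps * (∑ j, A i j) < 1 := by
    have h1 : eps * (∑ j, A i j) ≤ eps * T := by
      nlinarith [le_abs_self (∑ j, A i j), hepspos.le, hrow]
    have h2 : eps * T < 1 := by
      rw [hepsdef, div_mul_eq_mul_div, one_mul, div_lt_one (by linarith : (0:ℝ) < 1 + T)]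
      linarith
    linarith
  have hAx : ∑ j, A i j * x j ≤ -1 := by
    have := hx1 i
    have heq : ∑ j, (-A) i j * x j = -∑ j, A i j * x j := by
      rw [← Finset.sum_neg_distrib]
      exact Finset.sum_congr rfl fun j _ => by simp
    rw [heq] at this
    linarith
  have hAd : ∑ j, A i j * (x j + eps) < 0 := by
    have heq : ∑ j, A i j * (x j + eps) = (∑ j, A i j * x j) + eps * (∑ j, A i j) := by
      rw [Finset.mul_sum, ← Finset.sum_add_distrib]
      exact Finset.sum_congr rfl fun j _ => by ring
    rw [heq]
    linarith
  have heq2 : ∑ j, (x i + eps) * A i j * (x j + eps)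
      = (x i + eps) * ∑ j, A i j * (x j + eps) := by
    rw [Finset.mul_sum]
    exact Finset.sum_congr rfl fun j _ => by ring
  rw [heq2]
  have hdpos : 0 < x i + eps := by have := hx0 i; positivity
  exact mul_neg_of_pos_of_neg hdpos hAd
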